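/- In the Legendre case, ∫_{-1}^1 y^k L_l(y) L_m(y) (1/2) dy = Σ_{n=0}^k l^k_n · T(l,m,n), where l^k_n = [k-n even] · C(k,n) n! sqrt(2n+1) (k-n-1)!!/(k+n+1)!! and T(l,m,n) = ∫_{-1}^1 L_n(y) L_l(y) L_m(y) (1/2) dy. -/

import Mathlib

open MeasureTheory Real Filter

/-- The `n`-th orthonormal Legendre polynomial on `[-1,1]` w.r.t. weight `1/2`,
via Rodrigues' formula. -/
noncomputable def L (n : ℕ) : ℝ → ℝ := fun y =>
  (Real.sqrt (2 * n + 1) / ((2 : ℝ) ^ n * n.factorial)) *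
    iteratedDeriv n (fun t : ℝ => (t ^ 2 - 1) ^ n) y

open Polynomial Nat
open scoped Nat

noncomputable def Qp (n : ℕ) : ℝ[X] := derivative^[n] ((X^2 - 1)^n)

lemma iteratedDeriv_poly (p : ℝ[X]) (n : ℕ) :
    iteratedDeriv n (fun x => p.eval x) = fun x => (derivative^[n] p).eval x := by
  induction n with
  | zero => simp
  | succ n ih =>
    rw [iteratedDeriv_succ, ih]
    funext x
    rw [Function.iterate_succ_apply']
    exact Polynomial.deriv _

lemma dfact_odd (m : ℕ) : ((2*m+1)‼ : ℕ) * (2^m * m !) = (2*m+1)! := by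
  have h := Nat.factorial_eq_mul_doubleFactorial (2*m)
  rw [Nat.doubleFactorial_two_mul] at h
  rw [← h]

lemma desc_helper (n t : ℕ) : ((n+t).descFactorial n : ℕ) * t ! = (n+t)! := by
  rw [Nat.descFactorial_eq_factorial_mul_choose]
  have := Nat.choose_mul_factorial_mul_factorial (Nat.le_add_right n t)
  simp only [Nat.add_sub_cancel_left] at this
  rw [← this]; ring

lemma neg_pow_sub_one (s : ℕ) : ((-1:ℝ))^(s-1) * s = -((-1)^s * s) := by
  cases s with
  | zero => simp
  | succ s => rw [Nat.succ_sub_one, pow_succ]; push_cast; ring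

noncomputable def rc (n t : ℕ) : ℝ :=
  if t ≤ n ∧ Even (n - t) then
    (-1)^((n-t)/2) * (n.choose ((n+t)/2)) * ((n+t).descFactorial n) else 0

lemma coeffQ (n t : ℕ) : (Qp n).coeff t = rc n t := by
  have hexp : ((X^2 - 1 : ℝ[X]))^n
      = ∑ j ∈ Finset.range (n+1), Polynomial.C ((-1)^(j+n) * (n.choose j : ℝ)) * X^(2*j) := by
    rw [sub_pow]
    refine Finset.sum_congr rfl fun j hj => ?_
    rw [map_mul, ← C_eq_natCast]
    rw [show ((-1:ℝ)^(j+n)) = ((-1:ℝ))^(j+n) from rfl]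
    simp only [map_pow, map_neg, map_one, one_pow, mul_one, pow_mul]
    ring
  rw [Qp, hexp, iterate_derivative_sum]
  simp only [iterate_derivative_C_mul, iterate_derivative_X_pow_eq_C_mul,
    finset_sum_coeff, coeff_C_mul, coeff_X_pow]
  rcases Classical.em (t ≤ n ∧ Even (n - t)) with h | h
  · obtain ⟨ht, hev⟩ := h
    have hev2 : (n - t) % 2 = 0 := Nat.even_iff.mp hev
    have hnt : 2 * ((n+t)/2) = n + t := by omega
    rw [Finset.sum_eq_single ((n+t)/2)]
    · have e1 : t = 2*((n+t)/2) - n := by omega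
      rw [if_pos e1, rc, if_pos (⟨ht, hev⟩ : t ≤ n ∧ Even (n-t))]
      have h2 : (n+t)/2 + n = (n-t)/2 + 2*((n+t)/2) := by omega
      rw [h2, pow_add, pow_mul, hnt]
      norm_num
    · intro j hj hne
      by_cases he : t = 2*j - n
      · have hlt : 2*j < n := by
          by_contra hge
          push_neg at hge
          exact hne (by omega)
        rw [Nat.descFactorial_eq_zero_iff_lt.2 hlt]
        simp
      · rw [if_neg he]
        simp
    · intro hmem
      exact absurd (Finset.mem_range.2 (by omega)) hmem
  · rw [rc, if_neg h]
    refine Finset.sum_eq_zero fun j hj => ?_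
    have hj' : j ≤ n := by have := Finset.mem_range.mp hj; omega
    by_cases he : t = 2*j - n
    · by_cases hle : n ≤ 2*j
      · exfalso
        apply h
        refine ⟨by omega, ?_⟩
        have h3 : n - t = 2 * (n - j) := by omega
        exact h3 ▸ even_two_mul _
      · rw [Nat.descFactorial_eq_zero_iff_lt.2 (by omega)]
        simp
    · rw [if_neg he]
      simp

noncomputable def bc (k n : ℕ) : ℝ :=
  if Even (k - n) then
    ((k.choose n : ℝ) * (2*(n:ℝ)+1) * (((k-n-1)‼ : ℕ) : ℝ)) / ((2:ℝ)^n * (((k+n+1)‼ : ℕ) : ℝ))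
  else 0

noncomputable def gg (k t n : ℕ) : ℝ :=
  if t ≤ n ∧ Even (n - t) ∧ n ≤ k + 1 then
    (-1:ℝ)^((n-t)/2 - 1) * (((n-t)/2 : ℕ) : ℝ) * (k ! : ℝ) * ((n+t)! : ℝ) * (((n+k)/2 - 1)! : ℝ) /
      ((((n+t)/2)! : ℝ) * (((n-t)/2)! : ℝ) * (((k-n)/2)! : ℝ) * (t ! : ℝ) * ((n+k-1)! : ℝ))
  else 0

lemma gg_self (k t : ℕ) : gg k t t = 0 := by
  rw [gg]
  split
  · simp
  · rfl

lemma tele (k t n : ℕ) (ht : t < k) (he : (k - t) % 2 = 0) (hn : n ≤ k) :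
    ((k - t : ℕ) : ℝ) * (bc k n * rc n t) = gg k t (n+2) - gg k t n := by
  by_cases hc : t ≤ n ∧ (n - t) % 2 = 0
  · -- positive case
    obtain ⟨s, hs⟩ : ∃ s, n = t + 2*s := ⟨(n-t)/2, by omega⟩
    obtain ⟨d, hd⟩ : ∃ d, k = t + 2*s + 2*d := ⟨(k-n)/2, by omega⟩
    subst hs
    subst hd
    cases d with
    | zero =>
      obtain ⟨u, hu⟩ : ∃ u, s = u+1 := ⟨s-1, by omega⟩
      subst hu
      have c1 : Even (t + 2*(u+1) + 2*0 - (t + 2*(u+1))) := ⟨0, by omega⟩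
      have c2 : t ≤ t + 2*(u+1) ∧ Even (t + 2*(u+1) - t) := ⟨by omega, ⟨u+1, by omega⟩⟩
      have c4 : t ≤ t + 2*(u+1) ∧ Even (t + 2*(u+1) - t) ∧ t + 2*(u+1) ≤ t + 2*(u+1) + 2*0 + 1 :=
        ⟨by omega, ⟨u+1, by omega⟩, by omega⟩
      have c3 : ¬(t ≤ t + 2*(u+1) + 2 ∧ Even (t + 2*(u+1) + 2 - t) ∧ t + 2*(u+1) + 2 ≤ t + 2*(u+1) + 2*0 + 1) := by
        rintro ⟨-, -, h⟩; omega
      simp only [bc, rc, gg]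
      rw [if_pos c1, if_neg c3, if_pos c4, if_pos c2]
      simp only [Nat.mul_zero, Nat.add_zero,
        show t + 2*(u+1) = t+2*u+2 from by omega]
      simp only [show t + 2*u+2 - t = 2*(u+1) from by omega, Nat.sub_self, Nat.zero_sub,
        Nat.zero_div,
        show (2*(u+1))/2 = u+1 from by omega,
        show t+2*u+2 + (t+2*u+2) + 1 = 2*(t+2*u+2)+1 from by omega,
        show (t+2*u+2+t)/2 = t+u+1 from by omega,
        show (t+2*u+2 + (t+2*u+2))/2 - 1 = t+2*u+1 from by omega,
        show t+2*u+2 + (t+2*u+2) - 1 = 2*t+4*u+3 from by omega,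
        show 2*u+2 = 2*u+2 from rfl,
        Nat.choose_self, Nat.factorial_zero, Nat.add_sub_cancel,
        show ((0:ℕ)‼ : ℕ) = 1 from rfl]
      have F : ∀ m : ℕ, (m ! : ℝ) ≠ 0 := fun m => Nat.cast_ne_zero.mpr m.factorial_ne_zero
      have P : ∀ m : ℕ, ((2:ℝ))^m ≠ 0 := fun m => pow_ne_zero _ two_ne_zero
      have N2 : ((t + 2*u+2).choose (t+u+1) : ℝ) = (t + 2*u+2)! / ((t+u+1)! * (u+1)!) := by
        rw [Nat.cast_choose ℝ (by omega : t + u + 1 ≤ t + 2*u+2),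
          show t + 2*u+2 - (t+u+1) = u+1 from by omega]
      have N3 : (((t + 2*u+2 + t).descFactorial (t + 2*u+2)) : ℝ) = (t + 2*u+2 + t)! / t ! := by
        rw [eq_div_iff (F t)]
        exact_mod_cast desc_helper (t+2*u+2) t
      have N5 : (((2*(t+2*u+2)+1)‼ : ℕ) : ℝ)
          = (2*t+4*u+5)! / (2^(t+2*u+2) * (t+2*u+2)!) := by
        rw [eq_div_iff (mul_ne_zero (P _) (F _)),
          show (2*t+4*u+5) = 2*(t+2*u+2)+1 from by omega]
        exact_mod_cast dfact_odd (t+2*u+2)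
      have E1 : ((u+1)! : ℝ) = (u+1) * u ! := by rw [Nat.factorial_succ]; push_cast; ring
      have E2 : ((t+2*u+2)! : ℝ) = (t+2*u+2) * (t+2*u+1)! := by
        rw [show t+2*u+2 = (t+2*u+1)+1 from rfl, Nat.factorial_succ]; push_cast; ring
      have E3 : ((2*t+4*u+5)! : ℝ) = (2*t+4*u+5) * (2*t+4*u+4) * (2*t+4*u+3)! := by
        rw [show 2*t+4*u+5 = (2*t+4*u+4)+1 from rfl, Nat.factorial_succ,
          show 2*t+4*u+4 = (2*t+4*u+3)+1 from rfl, Nat.factorial_succ]; push_cast; ring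
      rw [N2, N3, N5, E1, E2, E3]
      push_cast
      field_simp
      ring
    | succ e =>
      have c1 : Even (t + 2*s + 2*(e+1) - (t + 2*s)) := ⟨e+1, by omega⟩
      have c2 : t ≤ t + 2*s ∧ Even (t + 2*s - t) := ⟨by omega, ⟨s, by omega⟩⟩
      have c3 : t ≤ t + 2*s + 2 ∧ Even (t + 2*s + 2 - t) ∧ t + 2*s + 2 ≤ t + 2*s + 2*(e+1) + 1 :=
        ⟨by omega, ⟨s+1, by omega⟩, by omega⟩
      have c4 : t ≤ t + 2*s ∧ Even (t + 2*s - t) ∧ t + 2*s ≤ t + 2*s + 2*(e+1) + 1 :=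
        ⟨by omega, ⟨s, by omega⟩, by omega⟩
      simp only [bc, rc, gg]
      rw [if_pos c1, if_pos c3, if_pos c4, if_pos c2]
      simp only [show t + 2*s + 2*(e+1) - t = 2*s+2*e+2 from by omega,
        show t + 2*s + 2*(e+1) - (t + 2*s) - 1 = 2*e+1 from by omega,
        show t + 2*s + 2*(e+1) + (t + 2*s) + 1 = 2*(t+2*s+e+1)+1 from by omega,
        show (t + 2*s - t)/2 = s from by omega,
        show (t + 2*s + t)/2 = t+s from by omega,
        show (t + 2*s + 2 - t)/2 = s+1 from by omega,
        show t + 2*s + 2 + t = t+2*s+t+2 from by omega,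
        show (t + 2*s + t + 2)/2 = t+s+1 from by omega,
        show (t + 2*s + 2 + (t + 2*s + 2*(e+1)))/2 - 1 = t+2*s+e+1 from by omega,
        show (t + 2*s + 2*(e+1) - (t + 2*s + 2))/2 = e from by omega,
        show t + 2*s + 2 + (t + 2*s + 2*(e+1)) - 1 = 2*t+4*s+2*e+3 from by omega,
        show (t + 2*s + (t + 2*s + 2*(e+1)))/2 - 1 = t+2*s+e from by omega,
        show (t + 2*s + 2*(e+1) - (t + 2*s))/2 = e+1 from by omega,
        show t + 2*s + (t + 2*s + 2*(e+1)) - 1 = 2*t+4*s+2*e+1 from by omega,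
        Nat.add_sub_cancel]
      have F : ∀ m : ℕ, (m ! : ℝ) ≠ 0 := fun m => Nat.cast_ne_zero.mpr m.factorial_ne_zero
      have P : ∀ m : ℕ, ((2:ℝ))^m ≠ 0 := fun m => pow_ne_zero _ two_ne_zero
      have N1 : ((t + 2*s + 2*(e+1)).choose (t + 2*s) : ℝ)
          = (t + 2*s + 2*(e+1))! / ((t + 2*s)! * (2*e+2)!) := by
        rw [Nat.cast_choose ℝ (by omega : t + 2*s ≤ t + 2*s + 2*(e+1)),
          show t + 2*s + 2*(e+1) - (t + 2*s) = 2*e+2 from by omega]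
      have N2 : ((t + 2*s).choose (t+s) : ℝ) = (t + 2*s)! / ((t+s)! * s !) := by
        rw [Nat.cast_choose ℝ (by omega : t + s ≤ t + 2*s),
          show t + 2*s - (t+s) = s from by omega]
      have N3 : (((t + 2*s + t).descFactorial (t + 2*s)) : ℝ) = (t + 2*s + t)! / t ! := by
        rw [eq_div_iff (F t)]
        exact_mod_cast desc_helper (t+2*s) t
      have N4 : (((2*e+1)‼ : ℕ) : ℝ) = (2*e+1)! / (2^e * e !) := by
        rw [eq_div_iff (mul_ne_zero (P e) (F e))]
        exact_mod_cast dfact_odd e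
      have N5 : (((2*(t+2*s+e+1)+1)‼ : ℕ) : ℝ)
          = (2*t+4*s+2*e+3)! / (2^(t+2*s+e+1) * ((t+2*s+e+1) * (t+2*s+e)!)) := by
        rw [eq_div_iff (by
          refine mul_ne_zero (P _) (mul_ne_zero ?_ (F _))
          positivity)]
        rw [show (2*t+4*s+2*e+3) = 2*(t+2*s+e+1)+1 from by omega,
          show ((t+2*s+e+1) : ℝ) * ((t+2*s+e)! : ℝ) = (((t+2*s+e+1) * (t+2*s+e)! : ℕ) : ℝ) from by push_cast; ring,
          show ((t+2*s+e+1) * (t+2*s+e)! : ℕ) = (t+2*s+e+1)! from (Nat.factorial_succ _).symm]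
        exact_mod_cast dfact_odd (t+2*s+e+1)
      have E2 : ((2*e+2)! : ℝ) = (2*e+2) * (2*e+1)! := by
        rw [show 2*e+2 = (2*e+1)+1 from rfl, Nat.factorial_succ]; push_cast; ring
      have E3 : ((s+1)! : ℝ) = (s+1) * s ! := by rw [Nat.factorial_succ]; push_cast; ring
      have E4 : ((t+s+1)! : ℝ) = (t+s+1) * (t+s)! := by rw [Nat.factorial_succ]; push_cast; ring
      have E5 : ((t+2*s+e+1)! : ℝ) = (t+2*s+e+1) * (t+2*s+e)! := by
        rw [Nat.factorial_succ]; push_cast; ring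
      have E6 : ((t+2*s+t+2)! : ℝ) = (t+2*s+t+2) * (t+2*s+t+1) * (t+2*s+t)! := by
        rw [show t+2*s+t+2 = (t+2*s+t+1)+1 from rfl, Nat.factorial_succ,
          show t+2*s+t+1 = (t+2*s+t)+1 from rfl, Nat.factorial_succ]; push_cast; ring
      have E7 : ((2*t+4*s+2*e+3)! : ℝ)
          = (2*t+4*s+2*e+3) * (2*t+4*s+2*e+2) * (2*t+4*s+2*e+1)! := by
        rw [show 2*t+4*s+2*e+3 = (2*t+4*s+2*e+2)+1 from rfl, Nat.factorial_succ,
          show 2*t+4*s+2*e+2 = (2*t+4*s+2*e+1)+1 from rfl, Nat.factorial_succ]; push_cast; ring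
      have E8 : ((e+1)! : ℝ) = (e+1) * e ! := by rw [Nat.factorial_succ]; push_cast; ring
      rw [neg_pow_sub_one]
      rw [N1, N2, N3, N4, N5]
      rw [E2, E3, E4, E5, E6, E7, E8]
      have P2 : (2:ℝ)^(t+2*s+e+1) = 2^(t+2*s) * 2^e * 2 := by
        rw [show t+2*s+e+1 = (t+2*s)+e+1 from rfl, pow_add, pow_add, pow_one]
      rw [P2]
      push_cast
      field_simp
      ring
  · have hrc : rc n t = 0 := by
      rw [rc, if_neg]
      rintro ⟨h1, h2⟩
      exact hc ⟨h1, Nat.even_iff.mp h2⟩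
    rw [hrc]
    have h2 : gg k t n = 0 := by
      rw [gg, if_neg]
      rintro ⟨a1, a2, a3⟩
      exact hc ⟨a1, Nat.even_iff.mp a2⟩
    have h3 : gg k t (n+2) = 0 := by
      rcases Nat.lt_or_ge n t with hlt | hge
      · rcases Classical.em (t = n+2) with he2 | hne2
        · rw [he2]; exact gg_self _ _
        · rw [gg, if_neg]
          rintro ⟨a1, a2, a3⟩
          have := Nat.even_iff.mp a2
          omega
      · have hodd : ¬((n-t) % 2 = 0) := fun hh => hc ⟨hge, hh⟩
        rw [gg, if_neg]
        rintro ⟨a1, a2, a3⟩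
        have := Nat.even_iff.mp a2
        omega
    rw [h2, h3]
    ring

lemma sum_shift (g : ℕ → ℝ) (N : ℕ) :
    ∑ n ∈ Finset.range N, (g (n+2) - g n) = g N + g (N+1) - g 0 - g 1 := by
  induction N with
  | zero => rw [Finset.sum_range_zero]; ring
  | succ N ih => rw [Finset.sum_range_succ, ih]; ring

lemma gg_zero (k t : ℕ) : gg k t 0 = 0 := by
  rw [gg]
  split
  · rename_i h
    have : t = 0 := by omega
    subst this
    norm_num
  · rfl

lemma gg_one (k t : ℕ) : gg k t 1 = 0 := by
  rw [gg]
  split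
  · rename_i h
    obtain ⟨h1, h2, h3⟩ := h
    have h4 := Nat.even_iff.mp h2
    have : t = 1 := by omega
    subst this
    norm_num
  · rfl

lemma sumS (k t : ℕ) :
    ∑ n ∈ Finset.range (k+1), bc k n * rc n t = if t = k then 1 else 0 := by
  rcases Classical.em (t = k) with rfl | hne
  · rw [if_pos rfl, Finset.sum_eq_single t]
    · have c1 : Even (t - t) := ⟨0, by omega⟩
      have c2 : t ≤ t ∧ Even (t - t) := ⟨le_rfl, c1⟩
      simp only [bc, rc, if_pos c1, if_pos c2]
      simp only [Nat.sub_self, Nat.zero_sub, Nat.zero_div, Nat.choose_self, pow_zero,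
        show t - t - 1 = 0 from by omega,
        show t + t + 1 = 2*t+1 from by omega,
        show (t+t)/2 = t from by omega,
        show ((0:ℕ)‼ : ℕ) = 1 from rfl]
      have F : ∀ a : ℕ, (a ! : ℝ) ≠ 0 := fun a => Nat.cast_ne_zero.mpr a.factorial_ne_zero
      have P : ∀ a : ℕ, ((2:ℝ))^a ≠ 0 := fun a => pow_ne_zero _ two_ne_zero
      have N3 : (((t + t).descFactorial t) : ℝ) = (t + t)! / t ! := by
        rw [eq_div_iff (F t)]
        exact_mod_cast desc_helper t t
      have N5 : (((2*t+1)‼ : ℕ) : ℝ) = (2*t+1)! / (2^t * t !) := by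
        rw [eq_div_iff (mul_ne_zero (P _) (F _))]
        exact_mod_cast dfact_odd t
      have E1 : ((2*t+1)! : ℝ) = (2*t+1) * (2*t)! := by
        rw [show 2*t+1 = (2*t)+1 from rfl, Nat.factorial_succ]; push_cast; ring
      have E2 : ((t+t)! : ℝ) = (2*t)! := by rw [show t+t = 2*t from by omega]
      rw [N3, N5, E1, E2]
      push_cast
      field_simp
    · intro n hn hne2
      have hn' := Finset.mem_range.mp hn
      rw [rc, if_neg]
      · ring
      · rintro ⟨h1, -⟩
        omega
    · intro hmem
      exact absurd (Finset.mem_range.2 (by omega)) hmem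
  · rw [if_neg hne]
    by_cases hp : t < k ∧ (k - t) % 2 = 0
    · obtain ⟨h1, h2⟩ := hp
      have hsum : ∑ n ∈ Finset.range (k+1), ((k - t : ℕ) : ℝ) * (bc k n * rc n t)
          = ∑ n ∈ Finset.range (k+1), (gg k t (n+2) - gg k t n) :=
        Finset.sum_congr rfl fun n hn =>
          tele k t n h1 h2 (by have := Finset.mem_range.mp hn; omega)
      rw [sum_shift] at hsum
      have hk1 : gg k t (k+1) = 0 := by
        rw [gg, if_neg]
        rintro ⟨a1, a2, a3⟩
        have := Nat.even_iff.mp a2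
        omega
      have hk2 : gg k t (k+2) = 0 := by
        rw [gg, if_neg]
        rintro ⟨a1, a2, a3⟩
        omega
      rw [hk1, hk2, gg_zero, gg_one, ← Finset.mul_sum] at hsum
      have hne0 : ((k - t : ℕ) : ℝ) ≠ 0 := Nat.cast_ne_zero.mpr (by omega)
      have := mul_eq_zero.mp (by linarith [hsum] : ((k - t : ℕ) : ℝ) * ∑ n ∈ Finset.range (k+1), (bc k n * rc n t) = 0)
      tauto
    · refine Finset.sum_eq_zero fun n hn => ?_
      have hn' := Finset.mem_range.mp hn
      rw [bc, rc]
      split_ifs with e1 e2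
      · exfalso
        have p1 := Nat.even_iff.mp e1
        have p2 := Nat.even_iff.mp e2.2
        have p3 := e2.1
        rw [not_and_or] at hp
        rcases hp with hp | hp <;> omega
      · ring
      · ring
      · ring

lemma keyPoly (k : ℕ) :
    (X : ℝ[X])^k = ∑ n ∈ Finset.range (k+1), Polynomial.C (bc k n) * Qp n := by
  apply Polynomial.ext
  intro t
  rw [finset_sum_coeff]
  simp only [coeff_C_mul, coeffQ, coeff_X_pow]
  exact (sumS k t).symm

lemma L_eq (n : ℕ) (y : ℝ) :
    L n y = (Real.sqrt (2 * n + 1) / ((2 : ℝ) ^ n * n !)) * (Qp n).eval y := by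
  rw [L, Qp]
  congr 1
  have h : (fun t : ℝ => (t^2-1)^n) = fun t => (((X^2-1)^n : ℝ[X])).eval t := by
    funext t; simp
  rw [h, iteratedDeriv_poly]

lemma pointwise (k : ℕ) (y : ℝ) :
    y ^ k = ∑ n ∈ Finset.range (k+1),
      (if Even (k - n) then
          (k.choose n : ℝ) * (n.factorial : ℝ) * Real.sqrt (2 * n + 1) *
            (Nat.doubleFactorial (k - n - 1) : ℝ) / (Nat.doubleFactorial (k + n + 1) : ℝ)
        else 0) * L n y := by
  have h := congrArg (Polynomial.eval y) (keyPoly k)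
  simp only [eval_pow, eval_X, eval_finset_sum, eval_mul, eval_C] at h
  rw [h]
  refine Finset.sum_congr rfl fun n hn => ?_
  rw [L_eq, bc]
  split_ifs with hev
  · have hnn : (0:ℝ) ≤ 2 * n + 1 := by positivity
    have hs : Real.sqrt (2 * n + 1) * Real.sqrt (2 * n + 1) = 2 * n + 1 :=
      Real.mul_self_sqrt hnn
    have F : (n ! : ℝ) ≠ 0 := Nat.cast_ne_zero.mpr n.factorial_ne_zero
    have P : ((2:ℝ))^n ≠ 0 := pow_ne_zero _ two_ne_zero
    have D : (((k+n+1)‼ : ℕ) : ℝ) ≠ 0 :=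
      Nat.cast_ne_zero.mpr (Nat.doubleFactorial_pos _).ne'
    field_simp
    ring_nf
    rw [show ((1:ℝ) + ↑n*2) = 2*↑n+1 from by ring, Real.sq_sqrt hnn]
    ring
  · simp

lemma L_cont (n : ℕ) : Continuous (L n) := by
  have h : L n = fun y => (Real.sqrt (2 * n + 1) / ((2 : ℝ) ^ n * n !)) * (Qp n).eval y :=
    funext (L_eq n)
  rw [h]
  exact continuous_const.mul (Qp n).continuous_aeval

theorem legendre_Kk_formula (k l m : ℕ) :
    (∫ y in (-1 : ℝ)..1, y ^ k * L l y * L m y * (1 / 2)) =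
      ∑ n ∈ Finset.range (k + 1),
        (if Even (k - n) then
          (k.choose n : ℝ) * (n.factorial : ℝ) * Real.sqrt (2 * n + 1) *
            (Nat.doubleFactorial (k - n - 1) : ℝ) / (Nat.doubleFactorial (k + n + 1) : ℝ)
        else 0) *
        (∫ y in (-1 : ℝ)..1, L n y * L l y * L m y * (1 / 2)) := by
  have h1 : ∀ y : ℝ, y ^ k * L l y * L m y * (1 / 2)
      = ∑ n ∈ Finset.range (k+1),
        (if Even (k - n) then
          (k.choose n : ℝ) * (n.factorial : ℝ) * Real.sqrt (2 * n + 1) *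
            (Nat.doubleFactorial (k - n - 1) : ℝ) / (Nat.doubleFactorial (k + n + 1) : ℝ)
        else 0) * (L n y * L l y * L m y * (1 / 2)) := by
    intro y
    rw [show y ^ k * L l y * L m y * (1 / 2)
        = (y ^ k) * (L l y * L m y * (1 / 2)) from by ring, pointwise k y, Finset.sum_mul]
    exact Finset.sum_congr rfl fun n _ => by ring
  simp only [h1]
  rw [intervalIntegral.integral_finset_sum]
  · exact Finset.sum_congr rfl fun n _ => intervalIntegral.integral_const_mul _ _
  · intro n hn
    apply Continuous.intervalIntegrable
    exact continuous_const.mul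
      ((((L_cont n).mul (L_cont l)).mul (L_cont m)).mul continuous_const)
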